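/- Fix C > 0. If λ_n → 1 and h_n → 0 with |λ_n − 1|/h_n → 0, then uniformly over integers a, b with 0 ≤ −a, b ≤ C/h_n (a < 0 < b), the ratio of the biased hitting probability (θ_n^0 − θ_n^a)/(θ_n^b − θ_n^a) (θ_n = 1/λ_n) to the symmetric value (−a)/(b−a) converges to 1. -/
import Mathlib


open Filter

private lemma pow_bd (l s : ℝ) (hl : 0 < l) (j : ℕ) (hs : s ≤ 1/2)
    (hj : (j : ℝ) * |l - 1| ≤ s) : 1 - s ≤ l ^ j ∧ l ^ j ≤ (1 - s)⁻¹ := by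
  have hs0 : 0 ≤ s := le_trans (by positivity) hj
  have ht : (0:ℝ) < 1 - s := by linarith
  rcases Nat.eq_zero_or_pos j with rfl | hj1
  · simp only [pow_zero]
    constructor
    · linarith
    · rw [le_inv_comm₀ one_pos ht]; linarith
  rcases le_or_gt l 1 with hle | hgt
  · constructor
    · have hber := one_add_mul_le_pow (a := l - 1) (by linarith) j
      have habs : |l - 1| = 1 - l := by
        rw [abs_of_nonpos (by linarith)]; ring
      rw [habs] at hj
      have : 1 + (j : ℝ) * (l - 1) ≤ (1 + (l - 1)) ^ j := hber
      have h2 : (1 + (l - 1)) = l := by ring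
      rw [h2] at this
      nlinarith
    · have h1 : l ^ j ≤ 1 := pow_le_one₀ hl.le hle
      have h2 : (1:ℝ) ≤ (1 - s)⁻¹ := by
        rw [le_inv_comm₀ one_pos ht]; linarith
      linarith
  · have hx : |l - 1| = l - 1 := abs_of_pos (by linarith)
    rw [hx] at hj
    have hxs : l - 1 ≤ s := by
      have : (1:ℝ) ≤ (j:ℝ) := by exact_mod_cast hj1
      nlinarith
    constructor
    · have : (1:ℝ) ≤ l ^ j := one_le_pow₀ hgt.le
      linarith
    · have h1x : (0:ℝ) < 1 - (l - 1) := by linarith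
      have hber := one_add_mul_le_pow (a := -(l - 1)) (by linarith) j
      have hlow : 1 - s ≤ (1 - (l - 1)) ^ j := by
        have : 1 + (j:ℝ) * (-(l-1)) ≤ (1 + -(l-1)) ^ j := hber
        have h2 : (1 + -(l - 1)) = (1 - (l - 1)) := by ring
        rw [h2] at this
        nlinarith
    -- l^j * (1-(l-1))^j ≤ 1
      have hprod : l ^ j * (1 - (l - 1)) ^ j ≤ 1 := by
        rw [← mul_pow]
        apply pow_le_one₀
        · nlinarith
        · nlinarith
      have hpj : (0:ℝ) < (1 - (l - 1)) ^ j := pow_pos h1x j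
      have h3 : l ^ j ≤ ((1 - (l - 1)) ^ j)⁻¹ := by
        have := (le_div_iff₀ hpj).mpr hprod
        rwa [one_div] at this
      have h4 : ((1 - (l - 1)) ^ j)⁻¹ ≤ (1 - s)⁻¹ :=
        inv_anti₀ ht hlow
      linarith

private lemma sum_bd (l s : ℝ) (hl : 0 < l) (k : ℕ) (hs : s ≤ 1/2)
    (hk : (k : ℝ) * |l - 1| ≤ s) :
    (k : ℝ) * (1 - s) ≤ ∑ j ∈ Finset.range k, l ^ j ∧
      (∑ j ∈ Finset.range k, l ^ j) ≤ (k : ℝ) * (1 - s)⁻¹ := by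
  have habs : 0 ≤ |l - 1| := abs_nonneg _
  have hbd : ∀ j ∈ Finset.range k, 1 - s ≤ l ^ j ∧ l ^ j ≤ (1 - s)⁻¹ := by
    intro j hjm
    apply pow_bd l s hl j hs
    have : (j : ℝ) ≤ (k : ℝ) := by
      exact_mod_cast (Finset.mem_range.mp hjm).le
    nlinarith
  constructor
  · have h0 := Finset.sum_le_sum (fun j hj => (hbd j hj).1)
    rwa [Finset.sum_const, Finset.card_range, nsmul_eq_mul] at h0
  · have h0 := Finset.sum_le_sum (fun j hj => (hbd j hj).2)
    rwa [Finset.sum_const, Finset.card_range, nsmul_eq_mul] at h0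

set_option maxHeartbeats 1000000 in
private lemma key_bound (l s : ℝ) (hl : 0 < l) (hne : l ≠ 1) (m bn : ℕ)
    (hm : 1 ≤ m) (hb : 1 ≤ bn) (hs : s ≤ 1/2)
    (hxs : ((m + bn : ℕ) : ℝ) * |l - 1| ≤ s) :
    |(1 - l ^ m) / ((l ^ bn)⁻¹ - l ^ m) * ((m : ℝ) + bn) / m - 1| ≤ 24 * s := by
  have hs0 : 0 ≤ s := le_trans (by positivity) hxs
  have ht : (0:ℝ) < 1 - s := by linarith
  set k := m + bn with hk
  set Sm := ∑ j ∈ Finset.range m, l ^ j with hSm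
  set Sk := ∑ j ∈ Finset.range k, l ^ j with hSk
  have hmk : (m : ℝ) * |l - 1| ≤ s := by
    have : (m:ℝ) ≤ (k:ℝ) := by exact_mod_cast Nat.le_add_right m bn
    nlinarith [abs_nonneg (l - 1)]
  have hbk : (bn : ℝ) * |l - 1| ≤ s := by
    have : (bn:ℝ) ≤ (k:ℝ) := by exact_mod_cast Nat.le_add_left bn m
    nlinarith [abs_nonneg (l - 1)]
  obtain ⟨hSm1, hSm2⟩ := sum_bd l s hl m hs hmk
  obtain ⟨hSk1, hSk2⟩ := sum_bd l s hl k hs hxs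
  rw [← hSm] at hSm1 hSm2
  rw [← hSk] at hSk1 hSk2
  obtain ⟨hB1, hB2⟩ := pow_bd l s hl bn hs hbk
  have hm0 : (0:ℝ) < m := by exact_mod_cast hm
  have hk0 : (0:ℝ) < k := by exact_mod_cast (by omega : 0 < k)
  have hSmpos : 0 < Sm := by nlinarith
  have hSkpos : 0 < Sk := by nlinarith
  have hBpos : (0:ℝ) < l ^ bn := pow_pos hl bn
  have hl1 : (1:ℝ) - l ≠ 0 := sub_ne_zero.mpr (Ne.symm hne)
  have hgm : 1 - l ^ m = (1 - l) * Sm := by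
    linear_combination geom_sum_mul l m
  have hgk : 1 - l ^ k = (1 - l) * Sk := by
    linear_combination geom_sum_mul l k
  have heq2 : (l ^ bn)⁻¹ - l ^ m = (1 - l) * Sk / l ^ bn := by
    rw [eq_div_iff hBpos.ne', sub_mul, inv_mul_cancel₀ hBpos.ne', ← pow_add]
    exact hgk
  have hkey : (1 - l ^ m) / ((l ^ bn)⁻¹ - l ^ m) = l ^ bn * Sm / Sk := by
    rw [hgm, heq2, div_div_eq_mul_div, mul_assoc, mul_div_mul_left _ _ hl1,
      mul_comm Sm (l ^ bn)]
  have hE : (1 - l ^ m) / ((l ^ bn)⁻¹ - l ^ m) * ((m : ℝ) + bn) / m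
      = (l ^ bn * Sm * (k : ℝ)) / (Sk * m) := by
    rw [hkey]
    have : ((m : ℝ) + bn) = (k : ℝ) := by push_cast [hk]; ring
    rw [this, div_mul_eq_mul_div, div_div]
  rw [hE]
  set E := (l ^ bn * Sm * (k : ℝ)) / (Sk * m) with hEdef
  have hinv : (1 - s)⁻¹ * (1 - s) = 1 := inv_mul_cancel₀ ht.ne'
  have htinv : (0:ℝ) < (1 - s)⁻¹ := inv_pos.mpr ht
  have hElb : (1 - s) ^ 3 ≤ E := by
    have h1 : (1 - s) * ((m : ℝ) * (1 - s)) * (k : ℝ) ≤ l ^ bn * Sm * (k : ℝ) := by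
      have := mul_le_mul hB1 hSm1 (mul_nonneg hm0.le ht.le) hBpos.le
      exact mul_le_mul_of_nonneg_right this hk0.le
    have h2 : Sk * (m : ℝ) ≤ (k : ℝ) * (1 - s)⁻¹ * (m : ℝ) :=
      mul_le_mul_of_nonneg_right hSk2 hm0.le
    have h3 : (0:ℝ) < Sk * m := mul_pos hSkpos hm0
    have h4 : (1 - s) ^ 3 = ((1 - s) * ((m : ℝ) * (1 - s)) * (k : ℝ)) / ((k : ℝ) * (1 - s)⁻¹ * (m : ℝ)) := by
      rw [eq_div_iff (mul_pos (mul_pos hk0 htinv) hm0).ne']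
      linear_combination ((1 - s)^2 * (k:ℝ) * (m:ℝ)) * hinv
    rw [h4]
    exact div_le_div₀ (mul_nonneg (mul_nonneg hBpos.le hSmpos.le) hk0.le) h1 h3 h2
  have hEub : E * (1 - s) ^ 3 ≤ 1 := by
    have h1 : l ^ bn * Sm * (k : ℝ) ≤ (1 - s)⁻¹ * ((m : ℝ) * (1 - s)⁻¹) * (k : ℝ) := by
      have := mul_le_mul hB2 hSm2 hSmpos.le htinv.le
      exact mul_le_mul_of_nonneg_right this hk0.le
    have h2 : (k : ℝ) * (1 - s) * (m : ℝ) ≤ Sk * (m : ℝ) :=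
      mul_le_mul_of_nonneg_right hSk1 hm0.le
    have h3 : (0:ℝ) < (k : ℝ) * (1 - s) * (m : ℝ) := mul_pos (mul_pos hk0 ht) hm0
    have h5 : E ≤ ((1 - s)⁻¹ * ((m : ℝ) * (1 - s)⁻¹) * (k : ℝ)) / ((k : ℝ) * (1 - s) * (m : ℝ)) :=
      div_le_div₀ (mul_nonneg (mul_nonneg htinv.le (mul_nonneg hm0.le htinv.le)) hk0.le) h1 h3 h2
    have h6 : ((1 - s)⁻¹ * ((m : ℝ) * (1 - s)⁻¹) * (k : ℝ)) * (1 - s) ^ 3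
        = (k : ℝ) * (1 - s) * (m : ℝ) := by
      linear_combination ((m:ℝ) * (k:ℝ) * (1 - s) * ((1 - s)⁻¹ * (1 - s) + 1)) * hinv
    calc E * (1 - s) ^ 3
        ≤ (((1 - s)⁻¹ * ((m : ℝ) * (1 - s)⁻¹) * (k : ℝ)) / ((k : ℝ) * (1 - s) * (m : ℝ))) * (1 - s) ^ 3 :=
          mul_le_mul_of_nonneg_right h5 (pow_nonneg ht.le 3)
      _ = 1 := by rw [div_mul_eq_mul_div, h6, div_self h3.ne']
  have h24 : 1 ≤ (1 + 24 * s) * (1 - s) ^ 3 := by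
    nlinarith [sq_nonneg (118 * s - 69), sq_nonneg s, mul_nonneg hs0 (sq_nonneg s),
      mul_nonneg (mul_nonneg hs0 hs0) hs0]
  have hub : E ≤ 1 + 24 * s := by
    nlinarith [mul_pos (mul_pos ht ht) ht, hEub, h24]
  rw [abs_le]
  constructor
  · nlinarith [hElb, mul_nonneg (sq_nonneg s) (by linarith : (0:ℝ) ≤ 3 - s)]
  · linarith

/-- Fix `C > 0`. If `λ_n → 1` and `h_n → 0` with `|λ_n − 1|/h_n → 0`, then
uniformly over integers `a < 0 < b` with `−a, b ≤ C/h_n`, the ratio of the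
biased hitting probability `(θ_n^0 − θ_n^a)/(θ_n^b − θ_n^a)` (with
`θ_n = 1/λ_n`) to the symmetric value `(−a)/(b−a)` converges to 1. -/
theorem biased_hitting_prob_uniform_ratio (C : ℝ) (hC : 0 < C)
    (lam : ℕ → ℝ) (hlam : ∀ n, 0 < lam n) (hlamne : ∀ n, lam n ≠ 1)
    (hlim : Tendsto lam atTop (nhds 1))
    (h : ℕ → ℝ) (hpos : ∀ n, 0 < h n)
    (hh : Tendsto h atTop (nhds 0))
    (hratio : Tendsto (fun n => |lam n - 1| / h n) atTop (nhds 0)) :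
    ∀ ε > 0, ∃ N : ℕ, ∀ n ≥ N, ∀ a b : ℤ, a < 0 → 0 < b →
      (-a : ℝ) ≤ C / h n → (b : ℝ) ≤ C / h n →
      |((1 - (1 / lam n) ^ a) / ((1 / lam n) ^ b - (1 / lam n) ^ a)) *
          ((b : ℝ) - a) / (-a : ℝ) - 1| < ε := by
  intro ε hε
  set δ : ℝ := min (1/2) (ε/48) / (2*C) with hδdef
  have hδ : 0 < δ := by
    apply div_pos (lt_min (by norm_num) (by linarith)) (by linarith)
  rw [Metric.tendsto_atTop] at hratio
  obtain ⟨N, hN⟩ := hratio δ hδ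
  refine ⟨N, fun n hn a b ha hb hma hbb => ?_⟩
  have hdist := hN n hn
  rw [Real.dist_eq, sub_zero] at hdist
  have hxn : 0 ≤ |lam n - 1| := abs_nonneg _
  have hhn := hpos n
  have hxh : |lam n - 1| / h n < δ := by
    have : |(|lam n - 1| / h n)| = |lam n - 1| / h n := abs_of_nonneg (by positivity)
    rwa [this] at hdist
  set m := (-a).toNat with hmdef
  set bn := b.toNat with hbndef
  have hmZ : ((m : ℤ)) = -a := Int.toNat_of_nonneg (by omega)
  have hbZ : ((bn : ℤ)) = b := Int.toNat_of_nonneg hb.le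
  have hm1 : 1 ≤ m := by omega
  have hb1 : 1 ≤ bn := by omega
  have e1 : (1 / lam n) ^ a = lam n ^ m := by
    rw [show a = -(m : ℤ) by omega, one_div, zpow_neg, zpow_natCast, inv_pow, inv_inv]
  have e2 : (1 / lam n) ^ b = (lam n ^ bn)⁻¹ := by
    rw [show b = (bn : ℤ) by omega, one_div, zpow_natCast, inv_pow]
  have e3 : ((b : ℝ) - a) = (m : ℝ) + bn := by
    have h1 : (b : ℝ) = (bn : ℝ) := by exact_mod_cast congrArg (Int.cast : ℤ → ℝ) hbZ.symm
    have h2 : ((-a : ℤ) : ℝ) = (m : ℝ) := by exact_mod_cast congrArg (Int.cast : ℤ → ℝ) hmZ.symm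
    push_cast at h1 h2 ⊢
    linarith
  have e4 : (-a : ℝ) = (m : ℝ) := by
    have h2 : ((-a : ℤ) : ℝ) = (m : ℝ) := by exact_mod_cast congrArg (Int.cast : ℤ → ℝ) hmZ.symm
    push_cast at h2 ⊢
    linarith
  rw [e1, e2, e3, e4]
  -- set up s
  set s : ℝ := ((m + bn : ℕ) : ℝ) * |lam n - 1| with hsdef
  have hmle : (m : ℝ) ≤ C / h n := by rw [← e4]; exact hma
  have hble : (bn : ℝ) ≤ C / h n := by
    have h1 : (b : ℝ) = (bn : ℝ) := by exact_mod_cast congrArg (Int.cast : ℤ → ℝ) hbZ.symm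
    rw [← h1]; exact hbb
  have hsbound : s < min (1/2) (ε/48) := by
    have h1 : ((m + bn : ℕ) : ℝ) ≤ 2 * C / h n := by
      push_cast
      have : 2 * C / h n = C / h n + C / h n := by ring
      linarith
    have h2 : s ≤ (2 * C / h n) * |lam n - 1| := by
      apply mul_le_mul_of_nonneg_right h1 hxn
    have h3 : (2 * C / h n) * |lam n - 1| = (2 * C) * (|lam n - 1| / h n) := by
      field_simp
    have h4 : (2 * C) * (|lam n - 1| / h n) < (2 * C) * δ := by
      apply mul_lt_mul_of_pos_left hxh (by linarith)
    have h5 : (2 * C) * δ = min (1/2) (ε/48) := by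
      rw [hδdef]
      field_simp
    linarith
  have hs12 : s ≤ 1/2 := le_of_lt (lt_of_lt_of_le hsbound (min_le_left _ _))
  have hsε : 24 * s < ε := by
    have := lt_of_lt_of_le hsbound (min_le_right _ _)
    linarith
  have := key_bound (lam n) s (hlam n) (hlamne n) m bn hm1 hb1 hs12 (le_refl s)
  calc |(1 - lam n ^ m) / ((lam n ^ bn)⁻¹ - lam n ^ m) * ((m : ℝ) + bn) / m - 1|
      ≤ 24 * s := this
    _ < ε := hsε
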